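/- The squared L² error of the penalized solution over the fluid domain satisfies (1/π)∫₀^π (A₁x + A₂)² dx ~ (m²η/3)(2 − (−1)^m) as η → 0, where A₁ and A₂ are the coefficients from the exact penalized solution. -/

import Mathlib

open Real Set Filter

private lemma coth_eq_exp (t : ℝ) :
    Real.cosh t / Real.sinh t =
      (1 + Real.exp (-2 * t)) / (1 - Real.exp (-2 * t)) := by
  have he : (Real.exp t / 2) ≠ 0 := by positivity
  have h1 : Real.exp t * Real.exp (-2 * t) = Real.exp (-t) := by
    rw [← Real.exp_add]; congr 1; ring
  rw [Real.cosh_eq, Real.sinh_eq, ← h1,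
    show (Real.exp t + Real.exp t * Real.exp (-2 * t)) / 2
      = (Real.exp t / 2) * (1 + Real.exp (-2 * t)) by ring,
    show (Real.exp t - Real.exp t * Real.exp (-2 * t)) / 2
      = (Real.exp t / 2) * (1 - Real.exp (-2 * t)) by ring,
    mul_div_mul_left _ _ he]

private lemma tendsto_coth_atTop :
    Tendsto (fun t => Real.cosh t / Real.sinh t) atTop (nhds 1) := by
  have hE : Tendsto (fun t : ℝ => Real.exp (-2 * t)) atTop (nhds 0) := by
    have h := Real.tendsto_exp_neg_atTop_nhds_zero
    have h2 := h.mul h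
    rw [mul_zero] at h2
    exact h2.congr fun t => by rw [← Real.exp_add]; congr 1; ring
  have h : Tendsto (fun t : ℝ => (1 + Real.exp (-2 * t)) / (1 - Real.exp (-2 * t)))
      atTop (nhds ((1 + 0) / (1 - 0))) :=
    (tendsto_const_nhds.add hE).div (tendsto_const_nhds.sub hE) (by norm_num)
  rw [show ((1:ℝ) + 0) / (1 - 0) = 1 by norm_num] at h
  exact h.congr fun t => (coth_eq_exp t).symm

private lemma tendsto_sinh_atTop' : Tendsto Real.sinh atTop atTop := by
  have h : Tendsto (fun t : ℝ => (Real.exp t + -Real.exp (-t)) / 2) atTop atTop := by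
    apply Tendsto.atTop_div_const (by norm_num : (0:ℝ) < 2)
    exact Real.tendsto_exp_atTop.atTop_add Real.tendsto_exp_neg_atTop_nhds_zero.neg
  exact h.congr fun t => by rw [Real.sinh_eq]; ring

/-- the squared L² penalization error over the fluid domain,
`(1/π)∫₀^π (A₁ x + A₂)² dx`, is asymptotically `(m²η/3)(2 − (−1)^m)` as `η → 0⁺`. -/
theorem stmt_3 (m : ℕ) (hm : 0 < m)
    (K A₁ A₂ : ℝ → ℝ)
    (hK : ∀ η, K η = -(Real.sqrt η * (1 + (-1 : ℝ) ^ m)) /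
      (π * (Real.cosh (π / (2 * Real.sqrt η)) / Real.sinh (π / (2 * Real.sqrt η)))
        + 2 * Real.sqrt η))
    (hA₁ : ∀ η, A₁ η = (m / (1 + η * m ^ 2)) * K η)
    (hA₂ : ∀ η, A₂ η = (m * Real.sqrt η / (1 + η * m ^ 2)) *
      (((K η + 1) * Real.cosh (π / Real.sqrt η) - K η - (-1 : ℝ) ^ m) /
        Real.sinh (π / Real.sqrt η))) :
    Tendsto (fun η : ℝ =>
        ((1 / π) * ∫ x in (0:ℝ)..π, (A₁ η * x + A₂ η) ^ 2) /
          ((m ^ 2 * η / 3) * (2 - (-1 : ℝ) ^ m)))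
      (nhdsWithin 0 (Ioi 0)) (nhds 1) := by
  have hπ : (0:ℝ) < π := Real.pi_pos
  set c : ℝ := (-1 : ℝ) ^ m with hc
  have hcases : c = 1 ∨ c = -1 := by
    rcases Nat.even_or_odd m with h | h
    · left; rw [hc, h.neg_one_pow]
    · right; rw [hc, h.neg_one_pow]
  have hmR : (0:ℝ) < (m : ℝ) := by exact_mod_cast hm
  -- the limit candidates
  set kq : ℝ → ℝ := fun s =>
    -(1 + c) / (π * (Real.cosh (π / (2 * s)) / Real.sinh (π / (2 * s))) + 2 * s) with hkqdef
  set a : ℝ → ℝ := fun s => ((m : ℝ) / (1 + s ^ 2 * (m : ℝ) ^ 2)) * kq s with hadef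
  set b : ℝ → ℝ := fun s => ((m : ℝ) / (1 + s ^ 2 * (m : ℝ) ^ 2)) *
    ((s * kq s + 1) * (Real.cosh (π / s) / Real.sinh (π / s)) -
      (s * kq s + c) * (Real.sinh (π / s))⁻¹) with hbdef
  -- basic limits as s → 0⁺
  have h0 : Tendsto (fun s : ℝ => s) (nhdsWithin 0 (Ioi 0)) (nhds 0) :=
    tendsto_id.mono_right nhdsWithin_le_nhds
  have hT1 : Tendsto (fun s : ℝ => π / s) (nhdsWithin 0 (Ioi 0)) atTop := by
    have := (tendsto_const_mul_atTop_of_pos hπ).mpr tendsto_inv_nhdsGT_zero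
    exact this.congr fun s => by rw [div_eq_mul_inv]
  have hT2 : Tendsto (fun s : ℝ => π / (2 * s)) (nhdsWithin 0 (Ioi 0)) atTop := by
    have := (tendsto_const_mul_atTop_of_pos (by positivity : (0:ℝ) < π / 2)).mpr
      tendsto_inv_nhdsGT_zero
    exact this.congr fun s => by ring
  have h1 : Tendsto (fun s : ℝ => Real.cosh (π / (2 * s)) / Real.sinh (π / (2 * s)))
      (nhdsWithin 0 (Ioi 0)) (nhds 1) := tendsto_coth_atTop.comp hT2
  have h2 : Tendsto (fun s : ℝ => Real.cosh (π / s) / Real.sinh (π / s))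
      (nhdsWithin 0 (Ioi 0)) (nhds 1) := tendsto_coth_atTop.comp hT1
  have h3 : Tendsto (fun s : ℝ => (Real.sinh (π / s))⁻¹)
      (nhdsWithin 0 (Ioi 0)) (nhds 0) :=
    (tendsto_sinh_atTop'.comp hT1).inv_tendsto_atTop
  have hkq : Tendsto kq (nhdsWithin 0 (Ioi 0)) (nhds (-(1 + c) / π)) := by
    have hden : Tendsto
        (fun s : ℝ => π * (Real.cosh (π / (2 * s)) / Real.sinh (π / (2 * s))) + 2 * s)
        (nhdsWithin 0 (Ioi 0)) (nhds (π * 1 + 2 * 0)) :=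
      (h1.const_mul π).add (h0.const_mul 2)
    rw [mul_one, mul_zero, add_zero] at hden
    exact tendsto_const_nhds.div hden hπ.ne'
  have hM : Tendsto (fun s : ℝ => (m : ℝ) / (1 + s ^ 2 * (m : ℝ) ^ 2))
      (nhdsWithin 0 (Ioi 0)) (nhds (m : ℝ)) := by
    have hden : Tendsto (fun s : ℝ => 1 + s ^ 2 * (m : ℝ) ^ 2)
        (nhdsWithin 0 (Ioi 0)) (nhds (1 + 0 ^ 2 * (m : ℝ) ^ 2)) :=
      tendsto_const_nhds.add ((h0.pow 2).mul_const _)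
    norm_num at hden
    have := Tendsto.div (tendsto_const_nhds (x := (m:ℝ))
      (f := nhdsWithin (0:ℝ) (Ioi 0))) hden one_ne_zero
    rw [div_one] at this; exact this
  have ha : Tendsto a (nhdsWithin 0 (Ioi 0)) (nhds ((m : ℝ) * (-(1 + c) / π))) :=
    hM.mul hkq
  have hb : Tendsto b (nhdsWithin 0 (Ioi 0)) (nhds ((m : ℝ) * 1)) := by
    have hsk : Tendsto (fun s : ℝ => s * kq s) (nhdsWithin 0 (Ioi 0)) (nhds 0) := by
      have := h0.mul hkq
      rwa [zero_mul] at this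
    have hin : Tendsto
        (fun s : ℝ => (s * kq s + 1) * (Real.cosh (π / s) / Real.sinh (π / s)) -
          (s * kq s + c) * (Real.sinh (π / s))⁻¹)
        (nhdsWithin 0 (Ioi 0)) (nhds ((0 + 1) * 1 - (0 + c) * 0)) :=
      ((hsk.add_const 1).mul h2).sub ((hsk.add_const c).mul h3)
    norm_num at hin
    exact hM.mul hin
  -- the integral
  have hint : ∀ A B : ℝ,
      (1 / π) * ∫ x in (0:ℝ)..π, (A * x + B) ^ 2
        = A ^ 2 * π ^ 2 / 3 + A * B * π + B ^ 2 := by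
    intro A B
    have e : ∀ x : ℝ, (A * x + B) ^ 2 = A ^ 2 * x ^ 2 + (2 * A * B * x + B ^ 2) :=
      fun x => by ring
    have i1 : IntervalIntegrable (fun x : ℝ => A ^ 2 * x ^ 2) MeasureTheory.volume 0 π :=
      (Continuous.intervalIntegrable (by continuity) 0 π)
    have i2 : IntervalIntegrable (fun x : ℝ => 2 * A * B * x) MeasureTheory.volume 0 π :=
      (Continuous.intervalIntegrable (by continuity) 0 π)
    have i3 : IntervalIntegrable (fun x : ℝ => (B ^ 2 : ℝ)) MeasureTheory.volume 0 π :=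
      intervalIntegrable_const
    have hI : (∫ x in (0:ℝ)..π, (A * x + B) ^ 2)
        = A ^ 2 * (π ^ 3 / 3) + (2 * A * B * (π ^ 2 / 2) + B ^ 2 * π) := by
      simp_rw [e]
      rw [intervalIntegral.integral_add i1 (i2.add i3),
        intervalIntegral.integral_add i2 i3,
        intervalIntegral.integral_const_mul, intervalIntegral.integral_const_mul,
        integral_pow, integral_id, intervalIntegral.integral_const]
      norm_num [smul_eq_mul]
      ring
    rw [hI]
    field_simp
    ring
  -- sqrt tends to 0⁺
  have hsqrt : Tendsto Real.sqrt (nhdsWithin 0 (Ioi 0)) (nhdsWithin 0 (Ioi 0)) := by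
    rw [tendsto_nhdsWithin_iff]
    constructor
    · have := (Real.continuous_sqrt.tendsto 0).mono_left
        (nhdsWithin_le_nhds (s := Ioi (0:ℝ)))
      simpa using this
    · filter_upwards [self_mem_nhdsWithin] with x hx
      exact Real.sqrt_pos.mpr hx
  -- the limit of the rescaled quadratic form
  set G : ℝ → ℝ := fun s => (a s) ^ 2 * π ^ 2 / 3 + a s * b s * π + (b s) ^ 2 with hGdef
  set α : ℝ := (m : ℝ) * (-(1 + c) / π) with hα
  set β : ℝ := (m : ℝ) * 1 with hβ
  have hG : Tendsto G (nhdsWithin 0 (Ioi 0))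
      (nhds (α ^ 2 * π ^ 2 / 3 + α * β * π + β ^ 2)) :=
    ((((ha.pow 2).mul_const (π ^ 2)).div_const 3).add ((ha.mul hb).mul_const π)).add
      (hb.pow 2)
  set Y : ℝ := ((m : ℝ) ^ 2 / 3) * (2 - c) with hY
  have hY0 : Y ≠ 0 := by
    rcases hcases with h | h <;> rw [hY, h] <;> positivity
  have hLY : α ^ 2 * π ^ 2 / 3 + α * β * π + β ^ 2 = Y := by
    rcases hcases with h | h <;>
      · rw [hα, hβ, hY, h]; field_simp; ring
  -- eventual equality of the ratio with G(√η)/Y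
  have heq : ∀ᶠ η in nhdsWithin 0 (Ioi (0:ℝ)),
      ((1 / π) * ∫ x in (0:ℝ)..π, (A₁ η * x + A₂ η) ^ 2) /
          (((m : ℝ) ^ 2 * η / 3) * (2 - c))
        = G (Real.sqrt η) / Y := by
    filter_upwards [self_mem_nhdsWithin] with η hη
    have hη' : (0:ℝ) < η := hη
    have hs : 0 < Real.sqrt η := Real.sqrt_pos.mpr hη'
    have hs2 : Real.sqrt η ^ 2 = η := Real.sq_sqrt hη'.le
    set s := Real.sqrt η with hsdef
    have hKs : K η = s * kq s := by
      rw [hK η, hkqdef, ← hsdef]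
      ring
    have e1 : A₁ η = s * a s := by
      simp only [hA₁, hKs, hadef]
      rw [← hs2]; ring
    have e2 : A₂ η = s * b s := by
      simp only [hA₂, hKs, hbdef, ← hsdef]
      rw [← hs2]; ring
    rw [hint (A₁ η) (A₂ η), e1, e2]
    have hnum : (s * a s) ^ 2 * π ^ 2 / 3 + (s * a s) * (s * b s) * π + (s * b s) ^ 2
        = s ^ 2 * G s := by rw [hGdef]; ring
    have hden : ((m : ℝ) ^ 2 * η / 3) * (2 - c) = s ^ 2 * Y := by
      rw [hY, ← hs2]; ring
    rw [hnum, hden, mul_div_mul_left _ _ (pow_ne_zero 2 hs.ne')]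
  have hfinal : Tendsto (fun η : ℝ => G (Real.sqrt η) / Y)
      (nhdsWithin 0 (Ioi 0)) (nhds 1) := by
    have := (hG.comp hsqrt).div_const Y
    rw [hLY, div_self hY0] at this
    exact this
  exact hfinal.congr' (by filter_upwards [heq] with η h using h.symm)
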